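/- For every natural number k, the polynomials h_k and h_{k+1} have no common non-unit factor in ℚ[x,y]; that is, any polynomial dividing both h_k and h_{k+1} is a nonzero constant. -/

import Mathlib

open MvPolynomial

/-- The complete homogeneous symmetric polynomial of degree `k` in two variables,
expressed in the elementary symmetric polynomials `x = X 0`, `y = X 1`. -/
noncomputable def h : ℕ → MvPolynomial (Fin 2) ℚ
  | 0 => 1
  | 1 => X 0
  | (k + 2) => X 0 * h (k + 1) - X 1 * h k

lemma h_rec (k : ℕ) : h (k + 2) = X 0 * h (k + 1) - X 1 * h k := rfl

/-- Key identity: `h (k+1)^2 - h (k+2) * h k = y^(k+1)`. -/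
lemma h_id (k : ℕ) :
    h (k + 1) * h (k + 1) - h (k + 2) * h k = (X 1 : MvPolynomial (Fin 2) ℚ) ^ (k + 1) := by
  induction k with
  | zero =>
    show X 0 * X 0 - (X 0 * X 0 - X 1 * 1) * 1 = _
    ring
  | succ n ih =>
    rw [h_rec (n + 1), h_rec n] at *
    linear_combination (X 1 : MvPolynomial (Fin 2) ℚ) * ih

noncomputable def φ : MvPolynomial (Fin 2) ℚ →ₐ[ℚ] Polynomial ℚ :=
  MvPolynomial.aeval ![Polynomial.X, 0]

lemma φ_h (n : ℕ) : φ (h n) = Polynomial.X ^ n := by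
  induction n using Nat.strong_induction_on with
  | _ n ih =>
    match n with
    | 0 => simp [h, φ]
    | 1 => simp [h, φ]
    | (m + 2) =>
      rw [h_rec m, map_sub, map_mul, map_mul, ih (m + 1) (by omega), ih m (by omega)]
      simp [φ]
      ring

lemma X1_not_dvd_h (n : ℕ) : ¬ (X 1 : MvPolynomial (Fin 2) ℚ) ∣ h n := by
  intro ⟨c, hc⟩
  have := congrArg φ hc
  rw [φ_h, map_mul] at this
  simp only [φ, MvPolynomial.aeval_X, Matrix.cons_val_one, Matrix.head_cons, zero_mul] at this
  exact pow_ne_zero n Polynomial.X_ne_zero this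

lemma prime_X1 : Prime (X 1 : MvPolynomial (Fin 2) ℚ) := by
  have h1 : Prime (X 0 : MvPolynomial (Fin 1) ℚ) := by
    rw [← MulEquiv.prime_iff (MvPolynomial.finSuccEquiv ℚ 0).toMulEquiv]
    simpa [MvPolynomial.finSuccEquiv_X_zero] using
      (Polynomial.prime_X : Prime (Polynomial.X : Polynomial (MvPolynomial (Fin 0) ℚ)))
  rw [← MulEquiv.prime_iff (MvPolynomial.finSuccEquiv ℚ 1).toMulEquiv]
  have : (MvPolynomial.finSuccEquiv ℚ 1) (X 1) = Polynomial.C (X 0) := by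
    simpa using MvPolynomial.finSuccEquiv_X_succ (R := ℚ) (n := 1) (j := 0)
  rw [show ((MvPolynomial.finSuccEquiv ℚ 1).toMulEquiv (X 1)) = Polynomial.C (X 0) from this,
    Polynomial.prime_C_iff]
  exact h1

theorem stmt3 (k : ℕ) (d : MvPolynomial (Fin 2) ℚ) (hd1 : d ∣ h k) (hd2 : d ∣ h (k + 1)) :
    IsUnit d := by
  cases k with
  | zero => exact isUnit_of_dvd_one (by simpa [h] using hd1)
  | succ m =>
    have hdvd : d ∣ (X 1 : MvPolynomial (Fin 2) ℚ) ^ (m + 1) := by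
      rw [← h_id m]
      exact dvd_sub (hd1.mul_left (h (m + 1))) (hd2.mul_right (h m))
    have hp : Prime (X 1 : MvPolynomial (Fin 2) ℚ) := prime_X1
    rcases (dvd_prime_pow hp (m + 1)).mp hdvd with ⟨i, _, hassoc⟩
    cases i with
    | zero => exact associated_one_iff_isUnit.mp (by simpa using hassoc)
    | succ j =>
      exfalso
      apply X1_not_dvd_h (m + 1)
      exact dvd_trans (dvd_trans (dvd_pow_self _ (Nat.succ_ne_zero j)) hassoc.symm.dvd) hd1
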